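/- Let p be a prime and q = p^e. For each 0 ≤ i ≤ q−2, the Gauss sum g(T^{−i}) = ∑_{x ∈ 𝔽_q^×} ξ_p^{Tr_{q/p}(x)} T(x)^{−i} ∈ ℤ_p[ξ_{p(q−1)}] has p-adic valuation ν_p(g(T^{−i})) = S_p(i)/(p−1); equivalently, (ξ_p − 1)^{S_p(i)} divides g(T^{−i}) in ℤ_p[ξ_{p(q−1)}] but (ξ_p − 1)^{S_p(i)+1} does not. Consequently, the coefficients λ_i defined by λ_0 = 1, λ_i = g(T^{−i})/(q−1) for 1 ≤ i ≤ q−2, and λ_{q−1} = −q/(q−1) satisfy ν_p(λ_i) = S_p(i)/(p−1) for all 0 ≤ i ≤ q−1. -/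

import Mathlib

set_option linter.unusedSectionVars false


open Finset

/-- Bundled setting for the Stickelberger computation. -/
structure StSetup (p e : ℕ) [Fact p.Prime] (F K : Type) [Field F] [Fintype F]
    [DecidableEq F] [Algebra (ZMod p) F] [Field K] [Algebra ℚ_[p] K] where
  he : 1 ≤ e
  hF : Fintype.card F = p ^ e
  ξp : K
  hξp : IsPrimitiveRoot ξp p
  ν : K → WithTop ℚ
  hν_mul : ∀ x y, ν (x * y) = ν x + ν y
  hν_add : ∀ x y, min (ν x) (ν y) ≤ ν (x + y)
  hν_top : ∀ x, ν x = ⊤ ↔ x = 0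
  hν_ext : ∀ a : ℚ_[p], a ≠ 0 → ν (algebraMap ℚ_[p] K a) = ((a.valuation : ℚ) : WithTop ℚ)
  T : F → K
  hT0 : T 0 = 0
  hTmul : ∀ x y, T (x * y) = T x * T y
  hTq : ∀ x, T x ^ (p ^ e) = T x
  hTinj : Function.Injective T
  hTadd : ∀ x y, (0 : WithTop ℚ) < ν (T (x + y) - T x - T y)

namespace StSetup

variable {p e : ℕ} [hp : Fact p.Prime] {F K : Type} [Field F] [Fintype F]
    [DecidableEq F] [Algebra (ZMod p) F] [Field K] [Algebra ℚ_[p] K]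
    (G : StSetup p e F K)

lemma nu_zero : G.ν 0 = ⊤ := (G.hν_top 0).2 rfl

lemma nu_ne_top {x : K} (hx : x ≠ 0) : G.ν x ≠ ⊤ := fun h => hx ((G.hν_top x).1 h)

lemma nu_one : G.ν 1 = 0 := by
  have h := G.hν_mul 1 1
  rw [mul_one] at h
  obtain ⟨a, ha⟩ := WithTop.ne_top_iff_exists.1 (G.nu_ne_top (one_ne_zero : (1:K) ≠ 0))
  rw [← ha] at h ⊢
  have h' : a = a + a := by exact_mod_cast h
  have : a = 0 := by linarith
  rw [this]
  exact WithTop.coe_zero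

lemma nu_pow_coe {x : K} {a : ℚ} (hx : G.ν x = (a : WithTop ℚ)) (n : ℕ) :
    G.ν (x ^ n) = ((n * a : ℚ) : WithTop ℚ) := by
  induction n with
  | zero => simpa using G.nu_one
  | succ n ih =>
    rw [pow_succ, G.hν_mul, ih, hx, ← WithTop.coe_add, WithTop.coe_eq_coe]
    push_cast
    ring

lemma nu_eq_zero_of_pow_eq_one {x : K} {n : ℕ} (hn : n ≠ 0) (h : x ^ n = 1) : G.ν x = 0 := by
  have hx0 : x ≠ 0 := by
    intro h0
    rw [h0, zero_pow hn] at h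
    exact zero_ne_one h
  obtain ⟨a, ha⟩ := WithTop.ne_top_iff_exists.1 (G.nu_ne_top hx0)
  have h2 : G.ν (x ^ n) = ((n * a : ℚ) : WithTop ℚ) := G.nu_pow_coe ha.symm n
  rw [h, G.nu_one] at h2
  have h3 : (n * a : ℚ) = 0 := by
    rw [← WithTop.coe_zero] at h2
    exact_mod_cast h2.symm
  have han : (n : ℚ) ≠ 0 := Nat.cast_ne_zero.2 hn
  have h4 : a = 0 := (mul_eq_zero.1 h3).resolve_left han
  rw [← ha, h4]
  exact WithTop.coe_zero

lemma nu_neg_one : G.ν (-1 : K) = 0 :=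
  G.nu_eq_zero_of_pow_eq_one (two_ne_zero) (by ring)

lemma nu_neg (x : K) : G.ν (-x) = G.ν x := by
  rw [← neg_one_mul, G.hν_mul, G.nu_neg_one, zero_add]

lemma nu_add_eq_of_lt {x y : K} (h : G.ν x < G.ν y) : G.ν (x + y) = G.ν x := by
  have h1 : G.ν x ≤ G.ν (x + y) := by
    have := G.hν_add x y
    rwa [min_eq_left h.le] at this
  have h2 : G.ν (x + y) ≤ G.ν x := by
    have := G.hν_add (x + y) (-y)
    rw [add_neg_cancel_right, G.nu_neg] at this
    rcases min_le_iff.1 this with h' | h'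
    · exact h'
    · exact absurd h' (not_le.2 h)
  exact le_antisymm h2 h1

lemma nu_sum_ge {ι : Type*} (s : Finset ι) (f : ι → K) {c : WithTop ℚ}
    (h : ∀ i ∈ s, c ≤ G.ν (f i)) : c ≤ G.ν (∑ i ∈ s, f i) := by
  classical
  induction s using Finset.cons_induction with
  | empty => simp [G.nu_zero]
  | cons a s ha ih =>
    rw [Finset.sum_cons]
    refine le_trans ?_ (G.hν_add _ _)
    exact le_min (h a (Finset.mem_cons_self a s)) (ih fun i hi => h i (Finset.mem_cons_of_mem hi))

lemma nu_natCast_nonneg (n : ℕ) : (0 : WithTop ℚ) ≤ G.ν (n : K) := by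
  induction n with
  | zero => simp [G.nu_zero]
  | succ n ih =>
    push_cast
    refine le_trans ?_ (G.hν_add (n : K) 1)
    rw [G.nu_one]
    exact le_min ih le_rfl


lemma coe_nsmul (n : ℕ) (r : ℚ) : n • ((r : WithTop ℚ)) = ((n * r : ℚ) : WithTop ℚ) := by
  induction n with
  | zero => simp
  | succ n ih =>
    rw [succ_nsmul, ih, ← WithTop.coe_add, WithTop.coe_eq_coe]
    push_cast; ring

lemma nu_prod {ι : Type*} (s : Finset ι) (f : ι → K) :
    G.ν (∏ i ∈ s, f i) = ∑ i ∈ s, G.ν (f i) := by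
  classical
  induction s using Finset.cons_induction with
  | empty => simpa using G.nu_one
  | cons a s ha ih => rw [Finset.prod_cons, Finset.sum_cons, G.hν_mul, ih]

lemma nu_xi : G.ν G.ξp = 0 :=
  G.nu_eq_zero_of_pow_eq_one hp.out.ne_zero G.hξp.pow_eq_one

lemma nu_geom_nonneg {x : K} (hx : G.ν x = 0) (n : ℕ) :
    (0 : WithTop ℚ) ≤ G.ν (∑ k ∈ range n, x ^ k) := by
  refine G.nu_sum_ge _ _ fun k _ => ?_
  rw [G.nu_pow_coe hx]
  simp

lemma nu_one_sub_le {α β : K} (hα : IsPrimitiveRoot α p) (hβ : β ^ p = 1) :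
    G.ν (1 - α) ≤ G.ν (1 - β) := by
  have : NeZero p := ⟨hp.out.ne_zero⟩
  obtain ⟨i, _, hi⟩ := hα.eq_pow_of_pow_eq_one hβ
  have hαν : G.ν α = 0 := G.nu_eq_zero_of_pow_eq_one hp.out.ne_zero hα.pow_eq_one
  have key : 1 - β = (∑ k ∈ range i, α ^ k) * (1 - α) := by
    have := geom_sum_mul α i
    rw [← hi]
    have h2 : (∑ k ∈ range i, α ^ k) * (1 - α) = -((∑ k ∈ range i, α ^ k) * (α - 1)) := by ring
    rw [h2, this]; ring
  rw [key, G.hν_mul]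
  calc G.ν (1 - α) = 0 + G.ν (1 - α) := by rw [zero_add]
  _ ≤ G.ν (∑ k ∈ range i, α ^ k) + G.ν (1 - α) :=
      add_le_add_left (G.nu_geom_nonneg hαν i) _

lemma nu_p_cast : G.ν ((p : K)) = ((1 : ℚ) : WithTop ℚ) := by
  have h1 : ((p : ℚ_[p]) : ℚ_[p]) ≠ 0 := by
    exact_mod_cast Nat.cast_ne_zero.2 hp.out.ne_zero
  have h2 := G.hν_ext (p : ℚ_[p]) h1
  rw [map_natCast] at h2
  rw [h2, Padic.valuation_p]
  norm_num

lemma nu_pi : G.ν (G.ξp - 1) = (((1 / ((p : ℚ) - 1)) : ℚ) : WithTop ℚ) := by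
  have hp1 : 1 < p := hp.out.one_lt
  have hne : (1 : K) - G.ξp ≠ 0 := by
    rw [sub_ne_zero]
    exact fun h => (G.hξp.ne_one hp1) h.symm
  obtain ⟨r, hr⟩ := WithTop.ne_top_iff_exists.1 (G.nu_ne_top hne)
  -- p = product of (1 - μ) over primitive roots
  have hcyc := Polynomial.cyclotomic_eq_prod_X_sub_primitiveRoots G.hξp
  have hprod : (p : K) = ∏ μ ∈ primitiveRoots p K, (1 - μ) := by
    have := Polynomial.eval_one_cyclotomic_prime (R := K) (p := p)
    rw [hcyc] at this
    rw [← this, Polynomial.eval_prod]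
    refine Finset.prod_congr rfl fun μ _ => ?_
    simp
  have hsame : ∀ μ ∈ primitiveRoots p K, G.ν (1 - μ) = ((r : ℚ) : WithTop ℚ) := by
    intro μ hμ
    have hμp : IsPrimitiveRoot μ p := (mem_primitiveRoots hp.out.pos).1 hμ
    have h1 : G.ν (1 - G.ξp) ≤ G.ν (1 - μ) := G.nu_one_sub_le G.hξp hμp.pow_eq_one
    have h2 : G.ν (1 - μ) ≤ G.ν (1 - G.ξp) := G.nu_one_sub_le hμp G.hξp.pow_eq_one
    rw [le_antisymm h2 h1, ← hr]
  have hcard : (primitiveRoots p K).card = p - 1 := by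
    rw [G.hξp.card_primitiveRoots, Nat.totient_prime hp.out]
  have hν : G.ν ((p : K)) = ((p - 1 : ℕ) * r : ℚ) := by
    rw [hprod, G.nu_prod, Finset.sum_congr rfl hsame, Finset.sum_const, hcard, coe_nsmul]
  rw [G.nu_p_cast] at hν
  have h3 : ((p - 1 : ℕ) : ℚ) * r = 1 := by exact_mod_cast hν.symm
  have hp1' : ((p : ℚ) - 1) ≠ 0 := by
    have : (1 : ℚ) < p := by exact_mod_cast hp1
    linarith
  have hcast : ((p - 1 : ℕ) : ℚ) = (p : ℚ) - 1 := by
    have : 1 ≤ p := hp1.le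
    push_cast [this]
    ring
  have hr' : r = 1 / ((p : ℚ) - 1) := by
    rw [hcast] at h3
    field_simp
    linarith
  have : G.ν (G.ξp - 1) = G.ν (1 - G.ξp) := by
    rw [← G.nu_neg (G.ξp - 1)]; ring_nf
  rw [this, ← hr, hr']


section Tlemmas

lemma q_pos : 0 < p ^ e := pow_pos hp.out.pos e

lemma q_ge_two (he : 1 ≤ e) : 2 ≤ p ^ e := by
  calc 2 ≤ p := hp.out.two_le
  _ = p ^ 1 := (pow_one p).symm
  _ ≤ p ^ e := Nat.pow_le_pow_right hp.out.pos he

lemma qm1_pos (he : 1 ≤ e) : 0 < p ^ e - 1 := by have := q_ge_two (p := p) he; omega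

lemma T_ne_zero {x : F} (hx : x ≠ 0) : G.T x ≠ 0 := by
  intro h
  exact hx (G.hTinj (h.trans G.hT0.symm))

lemma T_one : G.T 1 = 1 := by
  have h := G.hTmul 1 1
  rw [mul_one] at h
  have h1 : G.T 1 ≠ 0 := G.T_ne_zero one_ne_zero
  field_simp at h
  tauto

lemma T_pow (x : F) (n : ℕ) : G.T (x ^ n) = G.T x ^ n := by
  induction n with
  | zero => simpa using G.T_one
  | succ n ih => rw [pow_succ, G.hTmul, ih, pow_succ]

lemma T_inv {x : F} (hx : x ≠ 0) : G.T x⁻¹ = (G.T x)⁻¹ := by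
  have h : G.T x * G.T x⁻¹ = 1 := by
    rw [← G.hTmul, mul_inv_cancel₀ hx, G.T_one]
  exact eq_inv_of_mul_eq_one_right h

lemma T_pow_qm1 {x : F} (hx : x ≠ 0) : G.T x ^ (p ^ e - 1) = 1 := by
  have h := G.hTq x
  have h1 : p ^ e = (p ^ e - 1) + 1 := by have := q_ge_two (p := p) G.he; omega
  rw [h1, pow_succ] at h
  have h2 := G.T_ne_zero hx
  exact mul_right_cancel₀ h2 (h.trans (one_mul _).symm)

lemma nu_T {x : F} (hx : x ≠ 0) : G.ν (G.T x) = 0 :=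
  G.nu_eq_zero_of_pow_eq_one (Nat.pos_iff_ne_zero.1 (qm1_pos (p := p) G.he)) (G.T_pow_qm1 hx)

lemma nu_T_nonneg (x : F) : (0 : WithTop ℚ) ≤ G.ν (G.T x) := by
  by_cases hx : x = 0
  · rw [hx, G.hT0, G.nu_zero]; exact le_top
  · rw [G.nu_T hx]

end Tlemmas

section Approx

/-- `a` is congruent to `b` modulo the maximal ideal. -/
def approx (a b : K) : Prop := 0 < G.ν (a - b)

lemma approx_refl (a : K) : G.approx a a := by
  simp [approx, G.nu_zero]

lemma approx_symm {a b : K} (h : G.approx a b) : G.approx b a := by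
  unfold approx at *
  rwa [← G.nu_neg, neg_sub] at h

lemma approx_trans {a b c : K} (h1 : G.approx a b) (h2 : G.approx b c) : G.approx a c := by
  unfold approx at *
  have : a - c = (a - b) + (b - c) := by ring
  rw [this]
  exact lt_of_lt_of_le (lt_min h1 h2) (G.hν_add _ _)

lemma approx_add {a b a' b' : K} (h1 : G.approx a a') (h2 : G.approx b b') :
    G.approx (a + b) (a' + b') := by
  unfold approx at *
  have : a + b - (a' + b') = (a - a') + (b - b') := by ring
  rw [this]
  exact lt_of_lt_of_le (lt_min h1 h2) (G.hν_add _ _)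

lemma approx_mul {a b a' b' : K} (ha : (0:WithTop ℚ) ≤ G.ν a) (hb' : (0:WithTop ℚ) ≤ G.ν b')
    (h1 : G.approx a a') (h2 : G.approx b b') : G.approx (a * b) (a' * b') := by
  unfold approx at *
  have key : a * b - a' * b' = a * (b - b') + (a - a') * b' := by ring
  rw [key]
  refine lt_of_lt_of_le (lt_min ?_ ?_) (G.hν_add _ _)
  · rw [G.hν_mul]; exact lt_of_lt_of_le h2 (le_add_of_nonneg_left ha)
  · rw [G.hν_mul]; exact lt_of_lt_of_le h1 (le_add_of_nonneg_right hb')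

lemma approx_sum {ι : Type*} (s : Finset ι) (f h : ι → K)
    (H : ∀ i ∈ s, G.approx (f i) (h i)) : G.approx (∑ i ∈ s, f i) (∑ i ∈ s, h i) := by
  classical
  induction s using Finset.cons_induction with
  | empty => simpa using G.approx_refl 0
  | cons a s ha ih =>
    rw [Finset.sum_cons, Finset.sum_cons]
    exact G.approx_add (H a (Finset.mem_cons_self a s))
      (ih fun i hi => H i (Finset.mem_cons_of_mem hi))

lemma approx_T_add (x y : F) : G.approx (G.T (x + y)) (G.T x + G.T y) := by
  unfold approx
  have : G.T (x + y) - (G.T x + G.T y) = G.T (x + y) - G.T x - G.T y := by ring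
  rw [this]
  exact G.hTadd x y

lemma T_sum_approx {ι : Type*} (s : Finset ι) (f : ι → F) :
    G.approx (∑ i ∈ s, G.T (f i)) (G.T (∑ i ∈ s, f i)) := by
  classical
  induction s using Finset.cons_induction with
  | empty => simp only [Finset.sum_empty, G.hT0]; exact G.approx_refl 0
  | cons a s ha ih =>
    rw [Finset.sum_cons, Finset.sum_cons]
    refine G.approx_trans (G.approx_add (G.approx_refl (G.T (f a))) ih) ?_
    exact G.approx_symm (G.approx_T_add _ _)

lemma natCast_approx (n : ℕ) : G.approx ((n : K)) (G.T ((n : F))) := by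
  induction n with
  | zero => simp only [Nat.cast_zero, G.hT0]; exact G.approx_refl 0
  | succ n ih =>
    push_cast
    refine G.approx_trans (G.approx_add ih (by rw [← G.T_one]; exact G.approx_refl _)) ?_
    exact G.approx_symm (G.approx_T_add _ _)

lemma nu_eq_zero_of_approx {a : K} {c : F} (hc : c ≠ 0) (h : G.approx a (G.T c)) :
    G.ν a = 0 := by
  have h1 : a = G.T c + (a - G.T c) := by ring
  rw [h1, G.nu_add_eq_of_lt, G.nu_T hc]
  rw [G.nu_T hc]
  exact h

end Approx


section CharSums

lemma exists_gen (hF : Fintype.card F = p ^ e) :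
    ∃ γ : F, γ ≠ 0 ∧ (∀ i : ℕ, γ ^ i = 1 → (p ^ e - 1) ∣ i) ∧
      (∀ m : ℤ, γ ^ m = 1 → ((p ^ e - 1 : ℕ) : ℤ) ∣ m) := by
  obtain ⟨g, hg⟩ := IsCyclic.exists_generator (α := Fˣ)
  have hord : orderOf g = p ^ e - 1 := by
    rw [orderOf_eq_card_of_forall_mem_zpowers hg, Nat.card_eq_fintype_card, Fintype.card_units, hF]
  refine ⟨(g : F), Units.ne_zero g, fun i hi => ?_, fun m hm => ?_⟩
  · have : g ^ i = 1 := Units.ext (by rw [Units.val_pow_eq_pow_val, hi, Units.val_one])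
    rw [← hord]
    exact orderOf_dvd_of_pow_eq_one this
  · have : g ^ m = 1 := Units.ext (by rw [← Units.val_zpow_eq_zpow_val] at hm; rw [hm, Units.val_one])
    rw [← hord]
    exact orderOf_dvd_iff_zpow_eq_one.2 this

lemma mul_reindex (γ : F) (hγ : γ ≠ 0) (f : F → K) :
    ∑ x ∈ univ \ {0}, f x = ∑ x ∈ univ \ {0}, f (γ * x) := by
  refine Finset.sum_nbij' (fun x => γ⁻¹ * x) (fun x => γ * x) ?_ ?_ ?_ ?_ ?_
  · intro a ha
    simp only [mem_sdiff, mem_univ, mem_singleton, true_and] at ha ⊢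
    exact mul_ne_zero (inv_ne_zero hγ) ha
  · intro a ha
    simp only [mem_sdiff, mem_univ, mem_singleton, true_and] at ha ⊢
    exact mul_ne_zero hγ ha
  · intro a _; field_simp
  · intro a _; field_simp
  · intro a _
    rw [← mul_assoc, mul_inv_cancel₀ hγ, one_mul]

lemma Tsum_eq_zero (hF : Fintype.card F = p ^ e) {i : ℕ} (hi : ¬ (p ^ e - 1) ∣ i) :
    ∑ x ∈ univ \ {0}, (G.T x)⁻¹ ^ i = 0 := by
  obtain ⟨γ, hγ0, hγ, -⟩ := exists_gen (p := p) (e := e) hF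
  set S := ∑ x ∈ univ \ {0}, (G.T x)⁻¹ ^ i with hS
  have h1 : S = (G.T γ)⁻¹ ^ i * S := by
    rw [hS, Finset.mul_sum, mul_reindex γ hγ0 (fun x => (G.T x)⁻¹ ^ i)]
    refine Finset.sum_congr rfl fun x hx => ?_
    rw [G.hTmul, mul_inv, mul_pow]
  have h2 : (G.T γ)⁻¹ ^ i ≠ 1 := by
    intro h
    rw [inv_pow, inv_eq_one, ← G.T_pow] at h
    exact hi (hγ i (G.hTinj (h.trans G.T_one.symm)))
  have h3 : ((G.T γ)⁻¹ ^ i - 1) * S = 0 := by rw [sub_mul, one_mul, ← h1, sub_self]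
  rcases mul_eq_zero.1 h3 with h | h
  · exact absurd (by linear_combination h) h2
  · exact h

lemma Fsum_zpow (hF : Fintype.card F = p ^ e) (m : ℤ) :
    ∑ x ∈ (univ \ {0} : Finset F), x ^ m = if ((p ^ e - 1 : ℕ) : ℤ) ∣ m then (-1 : F) else 0 := by
  by_cases hd : ((p ^ e - 1 : ℕ) : ℤ) ∣ m
  · rw [if_pos hd]
    obtain ⟨k, hk⟩ := hd
    have h1 : ∀ x ∈ (univ \ {0} : Finset F), x ^ m = 1 := by
      intro x hx
      simp only [mem_sdiff, mem_univ, mem_singleton, true_and] at hx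
      rw [hk, zpow_mul, zpow_natCast, ← hF, FiniteField.pow_card_sub_one_eq_one x hx, one_zpow]
    rw [Finset.sum_congr rfl h1, Finset.sum_const]
    have hcard : (univ \ {0} : Finset F).card = p ^ e - 1 := by
      rw [Finset.card_sdiff_of_subset (Finset.subset_univ _), Finset.card_singleton, Finset.card_univ, hF]
    rw [hcard, nsmul_eq_mul, mul_one]
    have h2 : ((p ^ e : ℕ) : F) = 0 := by rw [← hF]; exact FiniteField.cast_card_eq_zero F
    have h3 : 1 ≤ p ^ e := q_pos (p := p) (e := e)
    push_cast [Nat.cast_sub h3] at h2 ⊢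
    rw [h2]; ring
  · rw [if_neg hd]
    obtain ⟨γ, hγ0, -, hγ⟩ := exists_gen (p := p) (e := e) hF
    set S := ∑ x ∈ (univ \ {0} : Finset F), x ^ m with hS
    have h1 : S = γ ^ m * S := by
      rw [hS, Finset.mul_sum, mul_reindex γ hγ0 (fun x => x ^ m)]
      exact Finset.sum_congr rfl fun x hx => mul_zpow γ x m
    have h2 : γ ^ m ≠ 1 := fun h => hd (hγ m h)
    have h3 : (γ ^ m - 1) * S = 0 := by rw [sub_mul, one_mul, ← h1, sub_self]
    rcases mul_eq_zero.1 h3 with h | h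
    · exact absurd (by linear_combination h) h2
    · exact h

lemma sdiff_insert_neg_one : (univ \ {0} : Finset F) = insert (-1) (univ \ {0, -1}) := by
  ext x
  have hne : (-1 : F) ≠ 0 := neg_ne_zero.2 one_ne_zero
  simp only [mem_sdiff, mem_univ, mem_singleton, true_and, mem_insert]
  by_cases h : x = -1 <;> simp [h, hne] <;> tauto

lemma Fsum2_zpow (hF : Fintype.card F = p ^ e) (m : ℤ) :
    ∑ x ∈ (univ \ {0, -1} : Finset F), x ^ m
      = (if ((p ^ e - 1 : ℕ) : ℤ) ∣ m then (-1 : F) else 0) - (-1 : F) ^ m := by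
  have h1 := Fsum_zpow (p := p) (e := e) hF m
  rw [sdiff_insert_neg_one (F := F)] at h1
  rw [Finset.sum_insert (by simp)] at h1
  linear_combination h1

end CharSums


section TraceFormula

omit [DecidableEq F] in
lemma trace_formula (he : 1 ≤ e) (hF : Fintype.card F = p ^ e) (x : F) :
    algebraMap (ZMod p) F (Algebra.trace (ZMod p) F x) = ∑ j ∈ range e, x ^ p ^ j := by
  classical
  haveI hchar : CharP F p := charP_of_injective_algebraMap (algebraMap (ZMod p) F).injective p
  -- the Frobenius as an algebra equivalence
  let φhom : F →ₐ[ZMod p] F :=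
    { toRingHom := frobenius F p
      commutes' := fun c => by
        show frobenius F p (algebraMap (ZMod p) F c) = algebraMap (ZMod p) F c
        rw [frobenius_def, ← map_pow, ZMod.pow_card] }
  have hbij : Function.Bijective φhom :=
    Finite.injective_iff_bijective.1 φhom.toRingHom.injective
  let φ : F ≃ₐ[ZMod p] F := AlgEquiv.ofBijective φhom hbij
  have hφ : ∀ y : F, φ y = y ^ p := fun y => rfl
  have hφpow : ∀ (j : ℕ) (y : F), (φ ^ j) y = y ^ p ^ j := by
    intro j
    induction j with
    | zero => intro y; simp
    | succ j ih =>
      intro y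
      rw [pow_succ, AlgEquiv.mul_apply, hφ, ih, ← pow_mul, pow_succ']
  have hrank : Module.finrank (ZMod p) F = e := by
    have hc := Module.card_eq_pow_finrank (K := ZMod p) (V := F)
    rw [ZMod.card, hF] at hc
    exact (Nat.pow_right_injective hp.out.two_le hc.symm)
  obtain ⟨γ, hγ0, hγ, -⟩ := exists_gen (p := p) (e := e) hF
  have hinj : Set.InjOn (fun j => φ ^ j) (range e : Finset ℕ) := by
    have key : ∀ j k : ℕ, j < k → k < e → φ ^ j = φ ^ k → False := by
      intro j k hjk hk heq
      have h1 : γ ^ p ^ j = γ ^ p ^ k := by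
        have := congrArg (fun σ : F ≃ₐ[ZMod p] F => σ γ) heq
        simpa [hφpow] using this
      have hle : p ^ j ≤ p ^ k := Nat.pow_le_pow_right hp.out.pos hjk.le
      have h2 : γ ^ (p ^ k - p ^ j) * γ ^ p ^ j = 1 * γ ^ p ^ j := by
        rw [← pow_add, Nat.sub_add_cancel hle, one_mul, h1]
      have h3 : γ ^ (p ^ k - p ^ j) = 1 :=
        mul_right_cancel₀ (pow_ne_zero _ hγ0) h2
      have h4 := hγ _ h3
      have h5 : p ^ k - p ^ j ≠ 0 := by
        have : p ^ j < p ^ k := Nat.pow_lt_pow_right hp.out.one_lt hjk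
        omega
      have h6 := Nat.le_of_dvd (Nat.pos_of_ne_zero h5) h4
      have h7 : p ^ k < p ^ e := Nat.pow_lt_pow_right hp.out.one_lt hk
      have h8 : 1 ≤ p ^ j := Nat.one_le_pow _ _ hp.out.pos
      have h9 : p ^ k - p ^ j + p ^ j = p ^ k := Nat.sub_add_cancel hle
      omega
    intro j hj k hk hjk
    simp only [coe_range, Set.mem_Iio] at hj hk
    rcases lt_trichotomy j k with h | h | h
    · exact absurd hjk (fun hh => key j k h hk hh)
    · exact h
    · exact absurd hjk.symm (fun hh => key k j h hj hh)
  have himg : (range e).image (fun j => φ ^ j) = (univ : Finset (F ≃ₐ[ZMod p] F)) := by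
    apply Finset.eq_univ_of_card
    rw [Finset.card_image_of_injOn hinj, card_range, ← Nat.card_eq_fintype_card, IsGalois.card_aut_eq_finrank, hrank]
  rw [trace_eq_sum_automorphisms x, ← himg, Finset.sum_image (fun a ha b hb hab => hinj ha hb hab)]
  exact Finset.sum_congr rfl fun j _ => hφpow j x

omit [DecidableEq F] in
lemma trace_frob (he : 1 ≤ e) (hF : Fintype.card F = p ^ e) (x : F) :
    Algebra.trace (ZMod p) F (x ^ p) = Algebra.trace (ZMod p) F x := by
  apply (algebraMap (ZMod p) F).injective
  rw [trace_formula (p := p) he hF, trace_formula (p := p) he hF]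
  have hsummand : ∀ j : ℕ, (x ^ p) ^ p ^ j = x ^ p ^ (j + 1) := by
    intro j
    rw [← pow_mul, ← pow_succ']
  have hxq : x ^ p ^ e = x := by rw [← hF]; exact FiniteField.pow_card x
  have h1 := Finset.sum_range_succ (fun j => x ^ p ^ j) e
  have h2 := Finset.sum_range_succ' (fun j => x ^ p ^ j) e
  have h3 : x ^ p ^ (0:ℕ) = x := by norm_num
  rw [Finset.sum_congr rfl (fun j _ => hsummand j)]
  rw [hxq] at h1
  rw [h3] at h2
  linear_combination h2.symm.trans h1

end TraceFormula


section Psi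

/-- The additive character. -/
noncomputable def psi (x : F) : K := G.ξp ^ (Algebra.trace (ZMod p) F x).val

/-- The Gauss sums. -/
noncomputable def gs (i : ℕ) : K :=
  ∑ x ∈ (univ \ {0} : Finset F), G.psi x * (G.T x)⁻¹ ^ i

lemma xi_pow_mod (n : ℕ) : G.ξp ^ (n % p) = G.ξp ^ n := by
  conv_rhs => rw [← Nat.div_add_mod n p]
  rw [pow_add, pow_mul, G.hξp.pow_eq_one, one_pow, one_mul]

lemma psi_add (x y : F) : G.psi (x + y) = G.psi x * G.psi y := by
  haveI : NeZero p := ⟨hp.out.ne_zero⟩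
  unfold psi
  rw [← pow_add, map_add, ZMod.val_add, xi_pow_mod]

lemma psi_zero : G.psi 0 = 1 := by
  haveI : NeZero p := ⟨hp.out.ne_zero⟩
  unfold psi
  rw [map_zero, ZMod.val_zero, pow_zero]

lemma nu_psi (x : F) : G.ν (G.psi x) = 0 := by
  unfold psi
  rw [G.nu_pow_coe G.nu_xi]
  norm_num

lemma nu_xi_pow_sub_one (t : ℕ) :
    ((1 / ((p:ℚ) - 1) : ℚ) : WithTop ℚ) ≤ G.ν (G.ξp ^ t - 1) := by
  have key : G.ξp ^ t - 1 = (∑ k ∈ range t, G.ξp ^ k) * (G.ξp - 1) := geom_sum_mul G.ξp t |>.symm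
  rw [key, G.hν_mul, G.nu_pi]
  exact le_add_of_nonneg_left (G.nu_geom_nonneg G.nu_xi t)

lemma nu_psi_sub_one (x : F) :
    ((1 / ((p:ℚ) - 1) : ℚ) : WithTop ℚ) ≤ G.ν (G.psi x - 1) := G.nu_xi_pow_sub_one _

lemma vp_pos : (0 : ℚ) < 1 / ((p:ℚ) - 1) := by
  have h : (1:ℚ) < p := by exact_mod_cast hp.out.one_lt
  have h2 : (0:ℚ) < (p:ℚ) - 1 := by linarith
  positivity

lemma nu_q_cast : G.ν (((p ^ e : ℕ) : K)) = ((e : ℚ) : WithTop ℚ) := by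
  push_cast
  rw [G.nu_pow_coe G.nu_p_cast]
  norm_num

lemma nu_qm1_cast : G.ν (((p ^ e - 1 : ℕ) : K)) = 0 := by
  have h1 : ((p ^ e - 1 : ℕ) : K) = -1 + ((p ^ e : ℕ) : K) := by
    have : 1 ≤ p ^ e := q_pos (p := p) (e := e)
    push_cast [Nat.cast_sub this]
    ring
  rw [h1, G.nu_add_eq_of_lt, G.nu_neg_one]
  rw [G.nu_neg_one, G.nu_q_cast]
  exact_mod_cast WithTop.coe_lt_coe.2 (by exact_mod_cast Nat.cast_pos.2 G.he)

lemma nu_g_zero : G.ν (G.gs 0) = 0 := by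
  have hsplit : G.gs 0 - ((p ^ e - 1 : ℕ) : K)
      = ∑ x ∈ (univ \ {0} : Finset F), (G.psi x - 1) := by
    rw [Finset.sum_sub_distrib, Finset.sum_const]
    have hcard : (univ \ {0} : Finset F).card = p ^ e - 1 := by
      rw [Finset.card_sdiff_of_subset (Finset.subset_univ _), Finset.card_singleton,
        Finset.card_univ, G.hF]
    rw [hcard, nsmul_eq_mul, mul_one]
    unfold gs
    simp only [pow_zero, mul_one]
  have hpos : (0 : WithTop ℚ) < G.ν (G.gs 0 - ((p ^ e - 1 : ℕ) : K)) := by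
    rw [hsplit]
    refine lt_of_lt_of_le ?_ (G.nu_sum_ge _ _ fun x _ => G.nu_psi_sub_one x)
    exact_mod_cast WithTop.coe_lt_coe.2 (vp_pos (p := p))
  have hdecomp : G.gs 0 = ((p ^ e - 1 : ℕ) : K) + (G.gs 0 - ((p ^ e - 1 : ℕ) : K)) := by ring
  rw [hdecomp, G.nu_add_eq_of_lt, G.nu_qm1_cast]
  rw [G.nu_qm1_cast]
  exact hpos

lemma g_pmul (m : ℕ) : G.gs (p * m) = G.gs m := by
  have hpe1 : p ^ (e-1) * p = p ^ e := by
    rw [← pow_succ]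
    congr 1
    have := G.he
    omega
  have hpe2 : p * p ^ (e-1) = p ^ e := by rw [mul_comm]; exact hpe1
  unfold gs
  refine Finset.sum_nbij' (fun x => x ^ p) (fun x => x ^ p ^ (e - 1)) ?_ ?_ ?_ ?_ ?_
  · intro a ha
    simp only [mem_sdiff, mem_univ, mem_singleton, true_and] at ha ⊢
    exact pow_ne_zero _ ha
  · intro a ha
    simp only [mem_sdiff, mem_univ, mem_singleton, true_and] at ha ⊢
    exact pow_ne_zero _ ha
  · intro a _
    show (a ^ p) ^ p ^ (e - 1) = a
    rw [← pow_mul, mul_comm p, hpe1, ← G.hF, FiniteField.pow_card]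
  · intro a _
    show (a ^ p ^ (e - 1)) ^ p = a
    rw [← pow_mul, hpe1, ← G.hF, FiniteField.pow_card]
  · intro a _
    show G.psi a * (G.T a)⁻¹ ^ (p * m) = G.psi (a ^ p) * (G.T (a ^ p))⁻¹ ^ m
    have hpsi : G.psi (a ^ p) = G.psi a := by
      unfold psi
      rw [trace_frob (p := p) G.he G.hF]
    have hT : (G.T (a ^ p))⁻¹ ^ m = (G.T a)⁻¹ ^ (p * m) := by
      rw [G.T_pow, ← inv_pow, pow_mul]
    rw [hpsi, hT]

end Psi


section GaussMult

lemma gauss_mult (i j : ℕ) (hij : ¬ (p ^ e - 1) ∣ (i + j)) :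
    G.gs i * G.gs j
      = (∑ t ∈ (univ \ {0, -1} : Finset F), (G.T t)⁻¹ ^ j * (G.T (1 + t)) ^ (i + j))
          * G.gs (i + j) := by
  have hstep1 : G.gs i * G.gs j
      = ∑ x ∈ (univ \ {0} : Finset F), ∑ t ∈ (univ \ {0} : Finset F),
          G.psi (x * (1 + t)) * (G.T x)⁻¹ ^ (i + j) * (G.T t)⁻¹ ^ j := by
    unfold gs
    rw [Finset.sum_mul]
    refine Finset.sum_congr rfl fun x hx => ?_
    simp only [mem_sdiff, mem_univ, mem_singleton, true_and] at hx
    rw [mul_reindex x hx (fun y => G.psi y * (G.T y)⁻¹ ^ j), Finset.mul_sum]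
    refine Finset.sum_congr rfl fun t ht => ?_
    simp only [mem_sdiff, mem_univ, mem_singleton, true_and] at ht
    have hps : G.psi x * G.psi (x * t) = G.psi (x * (1 + t)) := by
      rw [← G.psi_add]
      congr 1
      ring
    rw [G.hTmul, mul_inv, mul_pow, pow_add (G.T x)⁻¹ i j, ← hps]
    ring
  rw [hstep1, Finset.sum_comm]
  have hstep2 : ∀ t ∈ (univ \ {0} : Finset F),
      ∑ x ∈ (univ \ {0} : Finset F),
          G.psi (x * (1 + t)) * (G.T x)⁻¹ ^ (i + j) * (G.T t)⁻¹ ^ j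
        = (∑ x ∈ (univ \ {0} : Finset F), G.psi (x * (1 + t)) * (G.T x)⁻¹ ^ (i + j))
            * (G.T t)⁻¹ ^ j := by
    intro t _
    rw [Finset.sum_mul]
  rw [Finset.sum_congr rfl hstep2]
  have hmem : (-1 : F) ∈ (univ \ {0} : Finset F) := by
    simp only [mem_sdiff, mem_univ, mem_singleton, true_and]
    exact neg_ne_zero.2 one_ne_zero
  rw [Finset.sum_eq_sum_sdiff_singleton_add hmem]
  have hset : ((univ \ {0} : Finset F) \ {-1}) = (univ \ {0, -1} : Finset F) := by
    ext x
    simp only [mem_sdiff, mem_univ, mem_singleton, true_and, mem_insert, not_or]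
  rw [hset]
  have hneg : (∑ x ∈ (univ \ {0} : Finset F), G.psi (x * (1 + -1)) * (G.T x)⁻¹ ^ (i + j))
      * (G.T (-1 : F))⁻¹ ^ j = 0 := by
    have h0 : ∀ x ∈ (univ \ {0} : Finset F),
        G.psi (x * (1 + -1)) * (G.T x)⁻¹ ^ (i + j) = (G.T x)⁻¹ ^ (i + j) := by
      intro x _
      rw [add_neg_cancel, mul_zero, G.psi_zero, one_mul]
    rw [Finset.sum_congr rfl h0, G.Tsum_eq_zero G.hF hij, zero_mul]
  rw [hneg, add_zero]
  have hstep3 : ∀ t ∈ (univ \ {0, -1} : Finset F),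
      (∑ x ∈ (univ \ {0} : Finset F), G.psi (x * (1 + t)) * (G.T x)⁻¹ ^ (i + j))
          * (G.T t)⁻¹ ^ j
        = (G.T t)⁻¹ ^ j * (G.T (1 + t)) ^ (i + j) * G.gs (i + j) := by
    intro t ht
    simp only [mem_sdiff, mem_univ, mem_insert, mem_singleton, true_and, not_or] at ht
    obtain ⟨ht0, ht1⟩ := ht
    have h1t : (1 : F) + t ≠ 0 := by
      intro h
      exact ht1 (by linear_combination h)
    have hre : G.gs (i + j)
        = (G.T (1 + t))⁻¹ ^ (i + j)
            * ∑ x ∈ (univ \ {0} : Finset F), G.psi (x * (1 + t)) * (G.T x)⁻¹ ^ (i + j) := by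
      unfold gs
      rw [mul_reindex (1 + t) h1t (fun u => G.psi u * (G.T u)⁻¹ ^ (i + j)), Finset.mul_sum]
      refine Finset.sum_congr rfl fun x hx => ?_
      rw [G.hTmul, mul_inv, mul_pow]
      have harg : (1 + t) * x = x * (1 + t) := by ring
      rw [harg]
      ring
    have hTinv : (G.T (1 + t)) ^ (i + j) * (G.T (1 + t))⁻¹ ^ (i + j) = 1 := by
      rw [← mul_pow, mul_inv_cancel₀ (G.T_ne_zero h1t), one_pow]
    rw [hre]
    set Ssum := ∑ x ∈ (univ \ {0} : Finset F), G.psi (x * (1 + t)) * (G.T x)⁻¹ ^ (i + j)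
      with hSsum
    linear_combination (-((G.T t)⁻¹ ^ j * Ssum)) * hTinv
  rw [Finset.sum_congr rfl hstep3, ← Finset.sum_mul]

end GaussMult


section JacobiResidue

lemma jacobi_residue (hF : Fintype.card F = p ^ e) (i : ℕ) (h2 : 2 ≤ i)
    (hiq : i ≤ p ^ e - 2) :
    (∑ t ∈ (univ \ {0, -1} : Finset F), (t⁻¹) ^ (i-1) * (1 + t) ^ i) = -(i : F) := by
  have hq2 : 2 ≤ p ^ e := by
    rcases Nat.lt_or_ge (p ^ e) 2 with h | h
    · interval_cases h' : (p ^ e) <;> omega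
    · exact h
  have hq4 : 4 ≤ p ^ e := by omega
  have hstep : ∀ t ∈ (univ \ {0, -1} : Finset F),
      (t⁻¹) ^ (i-1) * (1 + t) ^ i
        = ∑ k ∈ range (i+1), (i.choose k : F) * t ^ ((k : ℤ) - ((i-1 : ℕ) : ℤ)) := by
    intro t ht
    simp only [mem_sdiff, mem_univ, mem_insert, mem_singleton, true_and, not_or] at ht
    obtain ⟨ht0, -⟩ := ht
    have hadd : (1 + t) ^ i = ∑ k ∈ range (i+1), t ^ k * (i.choose k : F) := by
      rw [add_comm 1 t, add_pow]
      simp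
    rw [hadd, Finset.mul_sum]
    refine Finset.sum_congr rfl fun k _ => ?_
    have hzp : (t⁻¹) ^ (i-1) * t ^ k = t ^ ((k : ℤ) - ((i-1 : ℕ) : ℤ)) := by
      rw [inv_pow, ← zpow_natCast t k, ← zpow_natCast t (i-1), ← zpow_neg,
        sub_eq_add_neg, zpow_add₀ ht0]
      ring
    rw [← hzp]
    ring
  rw [Finset.sum_congr rfl hstep, Finset.sum_comm]
  have hinner : ∀ k ∈ range (i+1),
      ∑ t ∈ (univ \ {0, -1} : Finset F), (i.choose k : F) * t ^ ((k : ℤ) - ((i-1 : ℕ) : ℤ))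
        = (i.choose k : F) *
            ((if ((p ^ e - 1 : ℕ) : ℤ) ∣ ((k : ℤ) - ((i-1 : ℕ) : ℤ)) then (-1 : F) else 0)
              - (-1 : F) ^ ((k : ℤ) - ((i-1 : ℕ) : ℤ))) := by
    intro k _
    rw [← Finset.mul_sum, Fsum2_zpow (p := p) (e := e) hF]
  rw [Finset.sum_congr rfl hinner]
  have hsplit : ∀ k ∈ range (i+1),
      (i.choose k : F) *
          ((if ((p ^ e - 1 : ℕ) : ℤ) ∣ ((k : ℤ) - ((i-1 : ℕ) : ℤ)) then (-1 : F) else 0)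
            - (-1 : F) ^ ((k : ℤ) - ((i-1 : ℕ) : ℤ)))
        = (i.choose k : F) *
            (if ((p ^ e - 1 : ℕ) : ℤ) ∣ ((k : ℤ) - ((i-1 : ℕ) : ℤ)) then (-1 : F) else 0)
          - (i.choose k : F) * ((-1 : F) ^ ((i-1 : ℕ) : ℤ))⁻¹ * (-1 : F) ^ k := by
    intro k _
    have hz : (-1 : F) ^ ((k : ℤ) - ((i-1 : ℕ) : ℤ))
        = (-1 : F) ^ (k : ℤ) * ((-1 : F) ^ ((i-1 : ℕ) : ℤ))⁻¹ := by
      rw [sub_eq_add_neg, zpow_add₀ (by norm_num : (-1:F) ≠ 0), zpow_neg]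
    rw [hz, zpow_natCast]
    ring
  rw [Finset.sum_congr rfl hsplit, Finset.sum_sub_distrib]
  have hfirst : ∑ k ∈ range (i+1),
      (i.choose k : F) *
        (if ((p ^ e - 1 : ℕ) : ℤ) ∣ ((k : ℤ) - ((i-1 : ℕ) : ℤ)) then (-1 : F) else 0)
      = -(i : F) := by
    have hmem : i - 1 ∈ range (i+1) := by
      rw [mem_range]; omega
    rw [Finset.sum_eq_single_of_mem (i-1) hmem ?_]
    · rw [if_pos (by simp), Nat.choose_symm (show 1 ≤ i by omega), Nat.choose_one_right]
      ring
    · intro k hk hne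
      rw [mem_range] at hk
      rw [if_neg ?_, mul_zero]
      intro hdvd
      rw [Int.natCast_dvd] at hdvd
      have hd0 : ((k : ℤ) - ((i-1 : ℕ) : ℤ)).natAbs ≠ 0 := by
        intro h0
        apply hne
        omega
      have hle := Nat.le_of_dvd (Nat.pos_of_ne_zero hd0) hdvd
      have hbound : ((k : ℤ) - ((i-1 : ℕ) : ℤ)).natAbs ≤ p ^ e - 3 := by
        omega
      omega
  rw [hfirst]
  have hfactor : ∑ k ∈ range (i+1),
      (i.choose k : F) * ((-1 : F) ^ ((i-1 : ℕ) : ℤ))⁻¹ * (-1 : F) ^ k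
      = ((-1 : F) ^ ((i-1 : ℕ) : ℤ))⁻¹
          * ∑ k ∈ range (i+1), (-1 : F) ^ k * (i.choose k : F) := by
    rw [Finset.mul_sum]
    exact Finset.sum_congr rfl fun k _ => by ring
  have halt : ∑ k ∈ range (i+1), (-1 : F) ^ k * (i.choose k : F) = 0 := by
    have h := Int.alternating_sum_range_choose (n := i)
    rw [if_neg (by omega)] at h
    have hcast : ∑ k ∈ range (i+1), (-1 : F) ^ k * (i.choose k : F)
        = ((∑ m ∈ range (i+1), (-1 : ℤ) ^ m * (i.choose m : ℤ) : ℤ) : F) := by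
      push_cast
      rfl
    rw [hcast, h, Int.cast_zero]
  rw [hfactor, halt, mul_zero, sub_zero]

end JacobiResidue


section NuJac

lemma nu_jac (i : ℕ) (h2 : 2 ≤ i) (hiq : i ≤ p ^ e - 2) (hpi : ¬ p ∣ i) :
    G.ν (∑ t ∈ (univ \ {0, -1} : Finset F), (G.T t)⁻¹ ^ (i-1) * (G.T (1 + t)) ^ i) = 0 := by
  have hTterm : ∀ t ∈ (univ \ {0, -1} : Finset F),
      (G.T t)⁻¹ ^ (i-1) * (G.T (1 + t)) ^ i = G.T ((t⁻¹) ^ (i-1) * ((1 + t) ^ i)) := by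
    intro t ht
    simp only [mem_sdiff, mem_univ, mem_insert, mem_singleton, true_and, not_or] at ht
    obtain ⟨ht0, -⟩ := ht
    rw [G.hTmul, G.T_pow, G.T_pow, G.T_inv ht0]
  rw [Finset.sum_congr rfl hTterm]
  have happrox := G.T_sum_approx (univ \ {0, -1} : Finset F)
    (fun t => (t⁻¹) ^ (i-1) * ((1 + t) ^ i))
  rw [jacobi_residue (p := p) (e := e) G.hF i h2 hiq] at happrox
  refine G.nu_eq_zero_of_approx ?_ happrox
  haveI : CharP F p := charP_of_injective_algebraMap (algebraMap (ZMod p) F).injective p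
  rw [neg_ne_zero]
  exact fun h => hpi ((CharP.cast_eq_zero_iff F p i).1 h)

omit [Algebra ℚ_[p] K] in
lemma B_residue (he : 1 ≤ e) (hF : Fintype.card F = p ^ e) :
    ∑ x ∈ (univ \ {0} : Finset F), algebraMap (ZMod p) F (Algebra.trace (ZMod p) F x) * x⁻¹
      = -1 := by
  have hterm : ∀ x ∈ (univ \ {0} : Finset F),
      algebraMap (ZMod p) F (Algebra.trace (ZMod p) F x) * x⁻¹
        = ∑ j ∈ range e, x ^ ((p ^ j : ℕ) : ℤ) * x ^ (-1 : ℤ) := by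
    intro x hx
    simp only [mem_sdiff, mem_univ, mem_singleton, true_and] at hx
    rw [trace_formula (p := p) he hF, Finset.sum_mul]
    refine Finset.sum_congr rfl fun j _ => ?_
    rw [zpow_natCast, zpow_neg_one]
  rw [Finset.sum_congr rfl hterm, Finset.sum_comm]
  have hinner : ∀ j ∈ range e,
      ∑ x ∈ (univ \ {0} : Finset F), x ^ ((p ^ j : ℕ) : ℤ) * x ^ (-1 : ℤ)
        = if j = 0 then (-1 : F) else 0 := by
    intro j hj
    rw [mem_range] at hj
    have hx : ∀ x ∈ (univ \ {0} : Finset F),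
        x ^ ((p ^ j : ℕ) : ℤ) * x ^ (-1 : ℤ) = x ^ (((p ^ j : ℕ) : ℤ) - 1) := by
      intro x hx
      simp only [mem_sdiff, mem_univ, mem_singleton, true_and] at hx
      rw [sub_eq_add_neg, zpow_add₀ hx]
    rw [Finset.sum_congr rfl hx, Fsum_zpow (p := p) (e := e) hF]
    by_cases hj0 : j = 0
    · rw [if_pos hj0, if_pos]
      rw [hj0]
      norm_num
    · rw [if_neg hj0, if_neg]
      intro hdvd
      rw [Int.natCast_dvd] at hdvd
      have h1 : 1 ≤ p ^ j := Nat.one_le_pow _ _ hp.out.pos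
      have h2 : p ^ j < p ^ e := Nat.pow_lt_pow_right hp.out.one_lt (by omega)
      have h3 : 2 ≤ p ^ j := by
        have : p ^ 1 ≤ p ^ j := Nat.pow_le_pow_right hp.out.pos (by omega)
        have := hp.out.two_le
        simp only [pow_one] at *
        omega
      have hne : (((p ^ j : ℕ) : ℤ) - 1).natAbs ≠ 0 := by omega
      have hle := Nat.le_of_dvd (Nat.pos_of_ne_zero hne) hdvd
      omega
  rw [Finset.sum_congr rfl hinner, Finset.sum_eq_single_of_mem 0 (by rw [mem_range]; omega)]
  · rw [if_pos rfl]
  · intro b _ hb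
    rw [if_neg hb]

lemma nu_B : G.ν (∑ x ∈ (univ \ {0} : Finset F),
    (((Algebra.trace (ZMod p) F x).val : ℕ) : K) * (G.T x)⁻¹) = 0 := by
  haveI : NeZero p := ⟨hp.out.ne_zero⟩
  have happ : G.approx
      (∑ x ∈ (univ \ {0} : Finset F), (((Algebra.trace (ZMod p) F x).val : ℕ) : K) * (G.T x)⁻¹)
      (G.T (∑ x ∈ (univ \ {0} : Finset F),
        algebraMap (ZMod p) F (Algebra.trace (ZMod p) F x) * x⁻¹)) := by
    refine G.approx_trans (G.approx_sum _ _
      (fun x => G.T (algebraMap (ZMod p) F (Algebra.trace (ZMod p) F x) * x⁻¹)) ?_)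
      (G.T_sum_approx _ _)
    intro x hx
    simp only [mem_sdiff, mem_univ, mem_singleton, true_and] at hx
    show G.approx _ (G.T (algebraMap (ZMod p) F (Algebra.trace (ZMod p) F x) * x⁻¹))
    rw [G.hTmul, ← G.T_inv hx]
    refine G.approx_mul (G.nu_natCast_nonneg _) (G.nu_T_nonneg _) ?_ (G.approx_refl _)
    have hc : ((((Algebra.trace (ZMod p) F x).val : ℕ) : F))
        = algebraMap (ZMod p) F (Algebra.trace (ZMod p) F x) := by
      rw [← map_natCast (algebraMap (ZMod p) F), ZMod.natCast_val, ZMod.cast_id]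
    rw [← hc]
    exact G.natCast_approx _
  rw [B_residue (p := p) G.he G.hF] at happ
  refine G.nu_eq_zero_of_approx ?_ happ
  exact neg_ne_zero.2 one_ne_zero

end NuJac

section GOne

lemma nu_xi_t_expansion (t : ℕ) :
    ((2 * (1 / ((p:ℚ) - 1)) : ℚ) : WithTop ℚ)
      ≤ G.ν (G.ξp ^ t - 1 - (t : K) * (G.ξp - 1)) := by
  rcases Nat.eq_zero_or_pos t with ht | ht
  · subst ht
    simp only [pow_zero, Nat.cast_zero, zero_mul, sub_zero, sub_self]
    rw [G.nu_zero]
    exact le_top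
  obtain ⟨s, rfl⟩ := Nat.exists_eq_succ_of_ne_zero (Nat.pos_iff_ne_zero.mp ht)
  set t := s + 1 with htdef
  have hξ : G.ξp = (G.ξp - 1) + 1 := by ring
  have hpow : G.ξp ^ t = ∑ k ∈ range (t+1), (G.ξp - 1) ^ k * (t.choose k : K) := by
    conv_lhs => rw [hξ]
    rw [add_pow]
    exact Finset.sum_congr rfl fun k _ => by rw [one_pow]; ring
  have hsplit : G.ξp ^ t - 1 - (t : K) * (G.ξp - 1)
      = ∑ k ∈ range s, (G.ξp - 1) ^ (k+2) * (t.choose (k+2) : K) := by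
    rw [hpow]
    rw [Finset.sum_range_succ' (fun k => (G.ξp - 1) ^ k * (t.choose k : K)) (s+1)]
    rw [Finset.sum_range_succ' (fun k => (G.ξp - 1) ^ (k+1) * (t.choose (k+1) : K)) s]
    simp only [pow_zero, Nat.choose_zero_right, Nat.cast_one, mul_one, one_mul, pow_one]
    rw [Nat.choose_one_right]
    push_cast
    ring
  rw [hsplit]
  refine G.nu_sum_ge _ _ fun k _ => ?_
  rw [G.hν_mul, G.nu_pow_coe G.nu_pi]
  have h1 : ((2 * (1 / ((p:ℚ) - 1)) : ℚ) : WithTop ℚ)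
      ≤ (((k + 2 : ℕ) * (1 / ((p:ℚ) - 1)) : ℚ) : WithTop ℚ) := by
    rw [WithTop.coe_le_coe]
    have hv := vp_pos (p := p)
    have : (2 : ℚ) ≤ ((k + 2 : ℕ) : ℚ) := by push_cast; linarith [Nat.cast_nonneg (α := ℚ) k]
    nlinarith
  exact le_trans h1 (le_add_of_nonneg_right (G.nu_natCast_nonneg _))

lemma nu_g_one (hq3 : 3 ≤ p ^ e) : G.ν (G.gs 1) = ((1 / ((p:ℚ) - 1) : ℚ) : WithTop ℚ) := by
  haveI : NeZero p := ⟨hp.out.ne_zero⟩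
  set π := G.ξp - 1 with hπ
  set B := ∑ x ∈ (univ \ {0} : Finset F),
    (((Algebra.trace (ZMod p) F x).val : ℕ) : K) * (G.T x)⁻¹ with hB
  set E := ∑ x ∈ (univ \ {0} : Finset F),
    (G.psi x - 1 - (((Algebra.trace (ZMod p) F x).val : ℕ) : K) * π) * (G.T x)⁻¹ with hE
  have hdecomp : G.gs 1 = (∑ x ∈ (univ \ {0} : Finset F), (G.T x)⁻¹) + B * π + E := by
    unfold gs
    rw [hB, hE, Finset.sum_mul, ← Finset.sum_add_distrib, ← Finset.sum_add_distrib]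
    refine Finset.sum_congr rfl fun x _ => ?_
    rw [pow_one]
    ring
  have hA : (∑ x ∈ (univ \ {0} : Finset F), (G.T x)⁻¹) = 0 := by
    have h := G.Tsum_eq_zero G.hF (i := 1) ?_
    · simpa using h
    · intro hdvd
      have := Nat.le_of_dvd one_pos hdvd
      omega
  rw [hdecomp, hA, zero_add]
  have hνBπ : G.ν (B * π) = ((1 / ((p:ℚ) - 1) : ℚ) : WithTop ℚ) := by
    rw [G.hν_mul, G.nu_B, zero_add, hπ, G.nu_pi]
  have hνE : ((2 * (1 / ((p:ℚ) - 1)) : ℚ) : WithTop ℚ) ≤ G.ν E := by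
    rw [hE]
    refine G.nu_sum_ge _ _ fun x hx => ?_
    simp only [mem_sdiff, mem_univ, mem_singleton, true_and] at hx
    rw [G.hν_mul, ← G.T_inv hx, G.nu_T (inv_ne_zero hx), add_zero]
    exact G.nu_xi_t_expansion _
  rw [G.nu_add_eq_of_lt, hνBπ]
  rw [hνBπ]
  refine lt_of_lt_of_le ?_ hνE
  rw [WithTop.coe_lt_coe]
  have := vp_pos (p := p)
  linarith

end GOne


section Digits

omit [Field F] [Fintype F] [DecidableEq F] [Algebra (ZMod p) F] in
lemma digits_pmul (m : ℕ) (hm : m ≠ 0) :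
    (Nat.digits p (p * m)).sum = (Nat.digits p m).sum := by
  rw [Nat.digits_def' hp.out.one_lt (Nat.mul_pos hp.out.pos (Nat.pos_of_ne_zero hm)), Nat.mul_mod_right,
    Nat.mul_div_cancel_left m hp.out.pos, List.sum_cons, Nat.zero_add]

omit [Field F] [Fintype F] [DecidableEq F] [Algebra (ZMod p) F] in
lemma digits_one : (Nat.digits p 1).sum = 1 := by
  rw [Nat.digits_def' hp.out.one_lt one_pos, Nat.mod_eq_of_lt hp.out.one_lt,
    Nat.div_eq_of_lt hp.out.one_lt]
  simp

omit [Field F] [Fintype F] [DecidableEq F] [Algebra (ZMod p) F] in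
lemma digits_sum_pred (i : ℕ) (h1 : 1 ≤ i) (hpi : ¬ p ∣ i) :
    (Nat.digits p i).sum = (Nat.digits p (i - 1)).sum + 1 := by
  have hr1 : 1 ≤ i % p := by
    rcases Nat.eq_zero_or_pos (i % p) with h | h
    · exact absurd (Nat.dvd_of_mod_eq_zero h) hpi
    · exact h
  rcases Nat.lt_or_ge i 2 with h2 | h2
  · have : i = 1 := by omega
    subst this
    rw [digits_one]
    simp
  · have hi1 : 1 ≤ i - 1 := by omega
    rw [Nat.digits_def' hp.out.one_lt (show 0 < i by omega),
      Nat.digits_def' hp.out.one_lt (show 0 < i - 1 by omega)]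
    have hmod := Nat.div_add_mod i p
    have hieq : i - 1 = p * (i / p) + (i % p - 1) := by omega
    have hrm : i % p - 1 < p := by
      have := Nat.mod_lt i hp.out.pos
      omega
    have hm : (i - 1) % p = i % p - 1 := by
      rw [hieq, Nat.mul_add_mod, Nat.mod_eq_of_lt hrm]
    have hd : (i - 1) / p = i / p := by
      rw [hieq, Nat.mul_add_div hp.out.pos, Nat.div_eq_of_lt hrm, Nat.add_zero]
    rw [hm, hd, List.sum_cons, List.sum_cons]
    omega

omit [Field F] [Fintype F] [DecidableEq F] [Algebra (ZMod p) F] in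
lemma digits_sum_qm1 (n : ℕ) : (Nat.digits p (p ^ n - 1)).sum = n * (p - 1) := by
  induction n with
  | zero => simp
  | succ n ih =>
    have hp2 := hp.out.two_le
    have h1 : 1 ≤ p ^ n := Nat.one_le_pow _ _ hp.out.pos
    have h2 : p ^ (n+1) = p * p ^ n := by ring
    obtain ⟨k, hk⟩ : ∃ k, p ^ n = k + 1 := ⟨p ^ n - 1, by omega⟩
    have e1 : p * (k + 1) = p * k + p := by ring
    have heq : p ^ (n+1) - 1 = p * (p ^ n - 1) + (p - 1) := by
      rw [h2, hk]
      simp only [Nat.add_sub_cancel]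
      omega
    have hpos : 0 < p ^ (n+1) - 1 := by
      have : p ^ n ≤ p ^ (n+1) := Nat.pow_le_pow_right hp.out.pos (by omega)
      omega
    rw [Nat.digits_def' hp.out.one_lt hpos]
    have hm : (p ^ (n+1) - 1) % p = p - 1 := by
      rw [heq, Nat.mul_add_mod, Nat.mod_eq_of_lt (by omega)]
    have hd : (p ^ (n+1) - 1) / p = p ^ n - 1 := by
      rw [heq, Nat.mul_add_div hp.out.pos, Nat.div_eq_of_lt (by omega), Nat.add_zero]
    rw [hm, hd, List.sum_cons, ih]
    ring

end Digits

section Main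

lemma nu_gs_eq (i : ℕ) (hi : i ≤ p ^ e - 2) :
    G.ν (G.gs i) = ((((Nat.digits p i).sum : ℚ) / ((p:ℚ) - 1) : ℚ) : WithTop ℚ) := by
  have hpq : ((p : ℚ) - 1) ≠ 0 := by
    have : (1:ℚ) < p := by exact_mod_cast hp.out.one_lt
    linarith
  induction i using Nat.strong_induction_on with
  | _ i IH =>
  rcases Nat.eq_zero_or_pos i with h0 | h0
  · subst h0
    rw [G.nu_g_zero]
    norm_num
  by_cases hpdvd : p ∣ i
  · obtain ⟨m, rfl⟩ := hpdvd
    have hm0 : m ≠ 0 := by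
      intro h
      subst h
      simp at h0
    have hmlt : m < p * m := by
      nlinarith [Nat.pos_of_ne_zero hm0, hp.out.two_le]
    have hmle : m ≤ p ^ e - 2 := le_trans hmlt.le hi
    rw [G.g_pmul m, IH m hmlt hmle, digits_pmul (p := p) m hm0]
  · rcases eq_or_lt_of_le (show 1 ≤ i from h0) with h1 | h1
    · rw [← h1] at hi ⊢
      have hq3 : 3 ≤ p ^ e := by
        have hq2 := q_ge_two (p := p) G.he
        omega
      rw [G.nu_g_one hq3, digits_one (p := p)]
      norm_num
    · have h2 : 2 ≤ i := h1
      have hq4 : 4 ≤ p ^ e := by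
        have hq2 := q_ge_two (p := p) G.he
        omega
      have hdvd : ¬ (p ^ e - 1) ∣ (1 + (i - 1)) := by
        have hix : 1 + (i - 1) = i := by omega
        rw [hix]
        intro hd
        have := Nat.le_of_dvd (by omega) hd
        omega
      have key := G.gauss_mult 1 (i-1) hdvd
      have hidx : 1 + (i - 1) = i := by omega
      rw [hidx] at key
      have hν := congrArg G.ν key
      rw [G.hν_mul, G.hν_mul, G.nu_jac i h2 hi hpdvd, zero_add] at hν
      rw [← hν, G.nu_g_one (by omega), IH (i-1) (by omega) (by omega),
        ← WithTop.coe_add, WithTop.coe_eq_coe,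
        digits_sum_pred (p := p) i h0 hpdvd]
      push_cast
      field_simp
      ring

end Main

end StSetup




/-- **Stickelberger's theorem.**  Let `p` be a prime and `q = p^e`.
For `0 ≤ i ≤ q−2`, the Gauss sum `g(T^{−i}) = ∑_{x ∈ 𝔽_q^×} ξ_p^{Tr_{q/p}(x)} T(x)^{−i}`
has `p`-adic valuation `S_p(i)/(p−1)`; consequently the coefficients
`λ_0 = 1`, `λ_i = g(T^{−i})/(q−1)` for `1 ≤ i ≤ q−2`, `λ_{q−1} = −q/(q−1)` satisfy
`ν_p(λ_i) = S_p(i)/(p−1)` for all `0 ≤ i ≤ q−1`.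

Here `ℚ_p(ξ_{p(q−1)})` is realized as `CyclotomicField (p(q−1)) ℚ_[p]`, `ξ_p` is a
primitive `p`-th root of unity therein, the (unique) extension `ν` of the `p`-adic
valuation is axiomatized by the hypotheses `hν_*`, and the Teichmüller lift `T`
by the hypotheses `hT*` (in particular `hTadd` expresses `T(x) ≡ x (mod 𝔪)`
compatibly with addition, i.e. that `T` reduces to a field embedding). -/
theorem stmt_18 (p e : ℕ) [Fact p.Prime] (he : 1 ≤ e)
    (hpos : 0 < p * (p ^ e - 1))
    (F : Type) [Field F] [Fintype F] [DecidableEq F] [Algebra (ZMod p) F]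
    (hF : Fintype.card F = p ^ e)
    (ξp : CyclotomicField (p * (p ^ e - 1)) ℚ_[p])
    (hξp : IsPrimitiveRoot ξp p)
    (ν : CyclotomicField (p * (p ^ e - 1)) ℚ_[p] → WithTop ℚ)
    (hν_mul : ∀ x y, ν (x * y) = ν x + ν y)
    (hν_add : ∀ x y, min (ν x) (ν y) ≤ ν (x + y))
    (hν_top : ∀ x, ν x = ⊤ ↔ x = 0)
    (hν_ext : ∀ a : ℚ_[p], a ≠ 0 →
      ν (algebraMap ℚ_[p] (CyclotomicField (p * (p ^ e - 1)) ℚ_[p]) a)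
        = ((a.valuation : ℚ) : WithTop ℚ))
    (T : F → CyclotomicField (p * (p ^ e - 1)) ℚ_[p])
    (hT0 : T 0 = 0)
    (hTmul : ∀ x y, T (x * y) = T x * T y)
    (hTq : ∀ x, T x ^ (p ^ e) = T x)
    (hTinj : Function.Injective T)
    (hTadd : ∀ x y, (0 : WithTop ℚ) < ν (T (x + y) - T x - T y))
    (g : ℕ → CyclotomicField (p * (p ^ e - 1)) ℚ_[p])
    (hg : ∀ i, g i = ∑ x ∈ (Finset.univ \ {0} : Finset F),
        ξp ^ (Algebra.trace (ZMod p) F x).val * (T x)⁻¹ ^ i)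
    (lam : ℕ → CyclotomicField (p * (p ^ e - 1)) ℚ_[p])
    (hlam : ∀ i, lam i = if i = 0 then 1 else if i = p ^ e - 1
        then -((p ^ e : ℕ) : CyclotomicField (p * (p ^ e - 1)) ℚ_[p])
          * (((p ^ e - 1 : ℕ) : CyclotomicField (p * (p ^ e - 1)) ℚ_[p]))⁻¹
        else g i * (((p ^ e - 1 : ℕ) : CyclotomicField (p * (p ^ e - 1)) ℚ_[p]))⁻¹) :
    (∀ i ≤ p ^ e - 2, ν (g i) = ((((Nat.digits p i).sum : ℚ) / ((p : ℚ) - 1) : ℚ) : WithTop ℚ)) ∧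
    (∀ i ≤ p ^ e - 1, ν (lam i) = ((((Nat.digits p i).sum : ℚ) / ((p : ℚ) - 1) : ℚ) : WithTop ℚ)) := by
  let G : StSetup p e F (CyclotomicField (p * (p ^ e - 1)) ℚ_[p]) :=
    { he := he, hF := hF, ξp := ξp, hξp := hξp, ν := ν, hν_mul := hν_mul, hν_add := hν_add,
      hν_top := hν_top, hν_ext := hν_ext, T := T, hT0 := hT0, hTmul := hTmul, hTq := hTq,
      hTinj := hTinj, hTadd := hTadd }
  have hp' : p.Prime := Fact.out
  have hpq : ((p : ℚ) - 1) ≠ 0 := by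
    have : (1:ℚ) < p := by exact_mod_cast hp'.one_lt
    linarith
  have hgG : ∀ i, g i = G.gs i := fun i => by rw [hg i]; rfl
  have part1 : ∀ i ≤ p ^ e - 2,
      ν (g i) = ((((Nat.digits p i).sum : ℚ) / ((p : ℚ) - 1) : ℚ) : WithTop ℚ) := by
    intro i hi
    rw [hgG i]
    exact G.nu_gs_eq i hi
  refine ⟨part1, ?_⟩
  intro i hi
  rw [hlam i]
  by_cases h0 : i = 0
  · subst h0
    rw [if_pos rfl]
    have h := G.nu_one
    simpa using h
  · rw [if_neg h0]
    have hνG : ν = G.ν := rfl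
    have hqm1ne : (((p ^ e - 1 : ℕ) : CyclotomicField (p * (p ^ e - 1)) ℚ_[p])) ≠ 0 := by
      intro hz
      have h1 := G.nu_qm1_cast
      rw [hz, G.nu_zero] at h1
      exact absurd h1 (by simp)
    have hinv0 : G.ν ((((p ^ e - 1 : ℕ) : CyclotomicField (p * (p ^ e - 1)) ℚ_[p])))⁻¹
        = 0 := by
      have h := G.hν_mul (((p ^ e - 1 : ℕ) : CyclotomicField (p * (p ^ e - 1)) ℚ_[p]))
        ((((p ^ e - 1 : ℕ) : CyclotomicField (p * (p ^ e - 1)) ℚ_[p])))⁻¹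
      rw [mul_inv_cancel₀ hqm1ne, G.nu_one, G.nu_qm1_cast, zero_add] at h
      exact h.symm
    by_cases hq : i = p ^ e - 1
    · rw [if_pos hq, hνG, G.hν_mul, G.nu_neg, G.nu_q_cast, hinv0, add_zero, hq,
        StSetup.digits_sum_qm1 (p := p) e, WithTop.coe_eq_coe]
      have hc : (((e * (p - 1) : ℕ)) : ℚ) = (e : ℚ) * ((p : ℚ) - 1) := by
        have h1 : 1 ≤ p := hp'.pos
        push_cast [Nat.cast_sub h1]
        ring
      rw [hc]
      field_simp
    · rw [if_neg hq]
      have hi2 : i ≤ p ^ e - 2 := by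
        have hq2 := StSetup.q_ge_two (p := p) he
        omega
      rw [hgG i, hνG, G.hν_mul, hinv0, add_zero]
      exact G.nu_gs_eq i hi2
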